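/- arXiv:1406.6748 — 5 statements merged into one kernel-verified Lean document; each statement's English description precedes it below -/
import Mathlib

section
/- Let q be a prime power and let C ⊆ F_q^n be a k-dimensional linear code that is projective (the n coordinate functionals c ↦ c_i on C are all nonzero and pairwise linearly independent) and is a two-weight code with weights w_1 and w_2 (every nonzero codeword has Hamming weight w_1 or w_2). Then the n coordinate functionals, regarded as points of the projectivization of the dual space C*, are n distinct points forming a two-intersection set with parameters (n, k, n − w_1, n − w_2) that spans C*: for every nonzero codeword c ∈ C, the hyperplane {ψ ∈ C* : ψ(c) = 0} contains exactly n − w_1 or exactly n − w_2 of these points, and every hyperplane of C* arises in this way. -/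
open scoped Classical in
theorem two_weight_code_gives_two_intersection_set
    (F : Type*) [Field F] [Fintype F] (n k w₁ w₂ : ℕ)
    (C : Submodule F (Fin n → F)) (hk : Module.finrank F C = k)
    (φ : Fin n → (↥C →ₗ[F] F)) (hφ : ∀ i (c : C), φ i c = (c : Fin n → F) i)
    (hnz : ∀ i, φ i ≠ 0)
    (hpair : ∀ i j, i ≠ j → LinearIndependent F ![φ i, φ j])
    (hw : ∀ c : C, c ≠ 0 →
      hammingNorm (c : Fin n → F) = w₁ ∨ hammingNorm (c : Fin n → F) = w₂) :
    Function.Injective (fun i => Projectivization.mk F (φ i) (hnz i)) ∧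
    Submodule.span F (Set.range φ) = ⊤ ∧
    (∀ c : C, c ≠ 0 →
      (Finset.univ.filter fun i => φ i c = 0).card = n - w₁ ∨
      (Finset.univ.filter fun i => φ i c = 0).card = n - w₂) ∧
    (∀ Ψ : Module.Dual F (Module.Dual F ↥C), Ψ ≠ 0 →
      ∃ c : C, c ≠ 0 ∧ LinearMap.ker Ψ = LinearMap.ker (Module.Dual.eval F ↥C c)) := by
  refine ⟨?_, ?_, ?_, ?_⟩
  · intro i j hij
    by_contra hne
    simp only [Projectivization.mk_eq_mk_iff] at hij
    obtain ⟨a, ha⟩ := hij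
    have := (linearIndependent_fin2.mp (hpair i j hne)).2 (a : F)
    simp only [Matrix.cons_val_one, Matrix.head_cons, Matrix.cons_val_zero] at this
    exact this ha
  · apply Submodule.span_eq_top_of_ne_zero
    intro z hz
    have : (z : Fin n → F) ≠ 0 := fun h => hz (Subtype.ext h)
    obtain ⟨i, hi⟩ := Function.ne_iff.mp this
    exact ⟨φ i, ⟨i, rfl⟩, by rw [hφ]; exact hi⟩
  · intro c hc
    have hcard : (Finset.univ.filter fun i => φ i c = 0).card
        = n - hammingNorm (c : Fin n → F) := by
      have h1 : (Finset.univ.filter fun i => φ i c = 0)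
          = Finset.univ.filter fun i => ¬ (c : Fin n → F) i ≠ 0 := by
        ext i; simp [hφ]
      rw [h1, hammingNorm, eq_tsub_iff_add_eq_of_le]
      · rw [add_comm]
        simpa using Finset.card_filter_add_card_filter_not (s := Finset.univ)
          (fun i => (c : Fin n → F) i ≠ 0)
      · simpa using Finset.card_filter_le Finset.univ (fun i => (c : Fin n → F) i ≠ 0)
    rcases hw c hc with h | h
    · left; rw [hcard, h]
    · right; rw [hcard, h]
  · intro Ψ hΨ
    refine ⟨(Module.evalEquiv F ↥C).symm Ψ, ?_, ?_⟩
    · simp only [ne_eq, map_eq_zero_iff _ (Module.evalEquiv F ↥C).symm.injective]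
      exact hΨ
    · have : Module.Dual.eval F ↥C ((Module.evalEquiv F ↥C).symm Ψ) = Ψ := by
        rw [← Module.evalEquiv_toLinearMap]
        exact (Module.evalEquiv F ↥C).apply_symm_apply Ψ
      rw [this]
end

section
/- Let q be a prime power with q not congruent to 2 modulo 3, let F be a finite field with q^6 elements, and let E_2 and E_3 be the subfields of F with q^2 and q^3 elements respectively. Set N = (q^2 − q + 1)(q − 1). If x, x' are nonzero elements of E_2 and y, y' are nonzero elements of E_3 with (xy)^N = (x'y')^N, then there exists a nonzero element λ of the subfield of F with q elements such that x'y' = λ·(xy). -/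
lemma cop1 (q : ℕ) (h3 : q % 3 ≠ 2) :
    Nat.Coprime (q ^ 2 - q + 1) (q + 1) := by
  have hle : q ≤ q ^ 2 := Nat.le_self_pow (by norm_num) q
  set g := Nat.gcd (q ^ 2 - q + 1) (q + 1) with hg
  have h1 : g ∣ q ^ 2 - q + 1 := Nat.gcd_dvd_left _ _
  have h2 : g ∣ q + 1 := Nat.gcd_dvd_right _ _
  have hz1 : (g : ℤ) ∣ (q : ℤ) ^ 2 - q + 1 := by
    have := Int.natCast_dvd_natCast.mpr h1
    push_cast [hle] at this
    exact this
  have hz2 : (g : ℤ) ∣ (q : ℤ) + 1 := by exact_mod_cast Int.natCast_dvd_natCast.mpr h2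
  have hz3 : (g : ℤ) ∣ 3 := by
    have := hz1.sub (hz2.mul_left ((q : ℤ) - 2))
    convert this using 1; rfl; ring
  have hg3 : g ∣ 3 := by exact_mod_cast hz3
  rcases (Nat.dvd_prime Nat.prime_three).mp hg3 with h | h
  · exact h
  · exfalso
    have : (3 : ℕ) ∣ q + 1 := h ▸ h2
    omega

lemma cop2 (q : ℕ) :
    Nat.Coprime (q ^ 2 - q + 1) (q ^ 2 + q + 1) := by
  have hle : q ≤ q ^ 2 := Nat.le_self_pow (by norm_num) q
  set g := Nat.gcd (q ^ 2 - q + 1) (q ^ 2 + q + 1) with hg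
  have h1 : g ∣ q ^ 2 - q + 1 := Nat.gcd_dvd_left _ _
  have h2 : g ∣ q ^ 2 + q + 1 := Nat.gcd_dvd_right _ _
  have hz1 : (g : ℤ) ∣ (q : ℤ) ^ 2 - q + 1 := by
    have := Int.natCast_dvd_natCast.mpr h1
    push_cast [hle] at this
    exact this
  have hz2 : (g : ℤ) ∣ (q : ℤ) ^ 2 + q + 1 := by
    exact_mod_cast Int.natCast_dvd_natCast.mpr h2
  have hz2q : (g : ℤ) ∣ 2 * q := by
    have := hz2.sub hz1
    convert this using 1; rfl; ring
  have hz2' : (g : ℤ) ∣ 2 := by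
    have hA : (g : ℤ) ∣ 2 * q * q := hz2q.mul_right q
    have hB : (g : ℤ) ∣ 2 * ((q : ℤ) ^ 2 - q + 1) := hz1.mul_left 2
    have hC : (g : ℤ) ∣ 2 * q - 2 := by
      have := hA.sub hB
      convert this using 1; rfl; ring
    have := hz2q.sub hC
    convert this using 1; rfl; ring
  have hg2 : g ∣ 2 := by exact_mod_cast hz2'
  have hodd : q ^ 2 - q + 1 = (q - 1) * q + 1 := by
    rw [Nat.sub_mul, one_mul, pow_two]
  have heven : Even ((q - 1) * q) := by
    rcases Nat.eq_zero_or_pos q with h0 | h0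
    · simp [h0]
    · have hq1 : (q - 1) + 1 = q := by omega
      have h := Nat.even_mul_succ_self (q - 1)
      rwa [hq1] at h
  obtain ⟨m, hm⟩ := heven
  rcases (Nat.dvd_prime Nat.prime_two).mp hg2 with h | h
  · exact h
  · exfalso
    have h2d : 2 ∣ (q - 1) * q + 1 := hodd ▸ (h ▸ h1)
    omega

lemma key_gcd (q : ℕ) (hq2 : 2 ≤ q) (h3 : q % 3 ≠ 2) :
    Nat.gcd ((q ^ 2 - q + 1) * (q - 1)) ((q ^ 2 - 1) * (q ^ 2 + q + 1)) = q - 1 := by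
  have hsq : q ^ 2 - 1 = (q + 1) * (q - 1) := by
    obtain ⟨k, rfl⟩ : ∃ k, q = k + 1 := ⟨q - 1, by omega⟩
    have h1 : (k + 1) ^ 2 = (k + 1 + 1) * (k + 1 - 1) + 1 := by simp; ring
    rw [h1, Nat.add_sub_cancel]
  have : (q ^ 2 - 1) * (q ^ 2 + q + 1) = ((q + 1) * (q ^ 2 + q + 1)) * (q - 1) := by
    rw [hsq]; ring
  rw [this, Nat.gcd_mul_right]
  have hc : Nat.Coprime (q ^ 2 - q + 1) ((q + 1) * (q ^ 2 + q + 1)) :=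
    (cop1 q h3).mul_right (cop2 q)
  rw [hc, one_mul]

-- power of an element of a subfield of known cardinality
lemma subfield_pow_eq_one {F : Type*} [Field F] [Fintype F] (E : Subfield F) (n : ℕ)
    (hE : Nat.card E = n) (a : F) (ha : a ∈ E) (ha0 : a ≠ 0) : a ^ (n - 1) = 1 := by
  letI : Fintype E := Fintype.ofFinite E
  have hcard : Fintype.card E = n := by rw [← Nat.card_eq_fintype_card]; exact hE
  set A : E := ⟨a, ha⟩ with hA
  have hA0 : A ≠ 0 := by
    intro hc
    apply ha0
    have := congrArg (Subtype.val) hc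
    exact this
  have := FiniteField.pow_card_sub_one_eq_one A hA0
  rw [hcard] at this
  have := congrArg (Subtype.val) this
  simpa using this

theorem segre_transversal (q : ℕ) (hq : IsPrimePow q) (hq3 : q % 3 ≠ 2)
    (F : Type*) [Field F] [Fintype F] (hF : Fintype.card F = q ^ 6)
    (E₂ E₃ : Subfield F) (hE₂ : Nat.card E₂ = q ^ 2) (hE₃ : Nat.card E₃ = q ^ 3)
    (x x' y y' : F) (hx : x ∈ E₂) (hx' : x' ∈ E₂) (hy : y ∈ E₃) (hy' : y' ∈ E₃)
    (hx0 : x ≠ 0) (hx'0 : x' ≠ 0) (hy0 : y ≠ 0) (hy'0 : y' ≠ 0)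
    (h : (x * y) ^ ((q ^ 2 - q + 1) * (q - 1)) = (x' * y') ^ ((q ^ 2 - q + 1) * (q - 1))) :
    ∃ lam : F, lam ≠ 0 ∧ lam ^ q = lam ∧ x' * y' = lam * (x * y) := by
  have hq2 : 2 ≤ q := hq.two_le
  set N := (q ^ 2 - q + 1) * (q - 1) with hN
  set M := (q ^ 2 - 1) * (q ^ 2 + q + 1) with hM
  -- the element lam
  set a : F := x' * x⁻¹ with ha_def
  set b : F := y' * y⁻¹ with hb_def
  have ha0 : a ≠ 0 := mul_ne_zero hx'0 (inv_ne_zero hx0)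
  have hb0 : b ≠ 0 := mul_ne_zero hy'0 (inv_ne_zero hy0)
  set lam : F := a * b with hlam_def
  have hlam0 : lam ≠ 0 := mul_ne_zero ha0 hb0
  have hxy0 : x * y ≠ 0 := mul_ne_zero hx0 hy0
  have hlam_eq : lam = (x' * y') * (x * y)⁻¹ := by
    field_simp [hlam_def, ha_def, hb_def]
    rw [hlam_def, ha_def, hb_def]; field_simp
  -- lam ^ N = 1
  have hLN : lam ^ N = 1 := by
    rw [hlam_eq, mul_pow, ← h, inv_pow, mul_inv_cancel₀ (pow_ne_zero _ hxy0)]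
  -- lam ^ M = 1
  have haE : a ∈ E₂ := E₂.mul_mem hx' (E₂.inv_mem hx)
  have hbE : b ∈ E₃ := E₃.mul_mem hy' (E₃.inv_mem hy)
  have hapow : a ^ (q ^ 2 - 1) = 1 := subfield_pow_eq_one E₂ (q ^ 2) hE₂ a haE ha0
  have hbpow : b ^ (q ^ 3 - 1) = 1 := subfield_pow_eq_one E₃ (q ^ 3) hE₃ b hbE hb0
  have hdvd2 : q ^ 2 - 1 ∣ M := ⟨q ^ 2 + q + 1, rfl⟩
  have hdvd3 : q ^ 3 - 1 ∣ M := by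
    refine ⟨q + 1, ?_⟩
    obtain ⟨k, rfl⟩ : ∃ k, q = k + 2 := ⟨q - 2, by omega⟩
    have e1 : (k + 2) ^ 2 - 1 = k ^ 2 + 4 * k + 3 := by
      have : (k + 2) ^ 2 = k ^ 2 + 4 * k + 3 + 1 := by ring
      omega
    have e2 : (k + 2) ^ 3 - 1 = k ^ 3 + 6 * k ^ 2 + 12 * k + 7 := by
      have : (k + 2) ^ 3 = k ^ 3 + 6 * k ^ 2 + 12 * k + 7 + 1 := by ring
      omega
    rw [hM, e1, e2]
    ring
  have hLM : lam ^ M = 1 := by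
    obtain ⟨k2, hk2⟩ := hdvd2
    obtain ⟨k3, hk3⟩ := hdvd3
    have hA : a ^ M = 1 := by rw [hk2, pow_mul, hapow, one_pow]
    have hB : b ^ M = 1 := by rw [hk3, pow_mul, hbpow, one_pow]
    rw [hlam_def, mul_pow, hA, hB, one_mul]
  -- order divides gcd = q - 1
  have hod : orderOf lam ∣ q - 1 := by
    have h1 : orderOf lam ∣ N := orderOf_dvd_of_pow_eq_one hLN
    have h2 : orderOf lam ∣ M := orderOf_dvd_of_pow_eq_one hLM
    have := Nat.dvd_gcd h1 h2
    rwa [hN, hM, key_gcd q hq2 hq3] at this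
  have hq1 : lam ^ (q - 1) = 1 := orderOf_dvd_iff_pow_eq_one.mp hod
  refine ⟨lam, hlam0, ?_, ?_⟩
  · have : q = (q - 1) + 1 := by omega
    rw [this, pow_succ, hq1, one_mul]
  · rw [hlam_eq, mul_assoc, inv_mul_cancel₀ hxy0, mul_one]
end

section
/- Let q be a prime power with q not congruent to 2 modulo 3, let F be a finite field with q^6 elements, and let E_2 and E_3 be the subfields of F with q^2 and q^3 elements respectively. If x is a nonzero element of E_2 and y is a nonzero element of E_3 such that (xy)^{(q^2 − q + 1)(q − 1)} = 1, then xy lies in the subfield of F with q elements, i.e., (xy)^q = xy. -/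
-- auxiliary coprimality lemmas
lemma aux_cop_a (a : ℕ) : Nat.Coprime (a^2+a+1) a := by
  have : a^2+a+1 = 1 + (a+1)*a := by ring
  rw [this]
  simpa using (Nat.coprime_add_mul_right_left 1 a (a+1)).mpr (Nat.one_coprime a)

lemma aux_cop_b (a : ℕ) (h3 : (a + 1) % 3 ≠ 2) : Nat.Coprime (a^2+a+1) (a+2) := by
  set d := Nat.gcd (a^2+a+1) (a+2) with hd
  have h1 : d ∣ a^2+a+1 := Nat.gcd_dvd_left _ _
  have h2 : d ∣ a+2 := Nat.gcd_dvd_right _ _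
  have h4 : d ∣ (a+2)*(a+2) := h2.mul_left _
  have h5 : d ∣ 3*(a+1) := by
    have hs := Nat.dvd_sub h4 h1
    have e : (a+2)*(a+2) - (a^2+a+1) = 3*(a+1) := by
      have : (a+2)*(a+2) = a^2+a+1 + 3*(a+1) := by ring
      omega
    rwa [e] at hs
  have h6 : d ∣ 3 := by
    have hs := Nat.dvd_sub (h2.mul_left 3) h5
    have e : 3*(a+2) - 3*(a+1) = 3 := by omega
    rwa [e] at hs
  rcases (Nat.dvd_prime Nat.prime_three).mp h6 with h | h
  · exact h
  · exfalso
    rw [h] at h2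
    omega

lemma aux_cop_c (a : ℕ) : Nat.Coprime (a^2+a+1) (a^2+3*a+3) := by
  set d := Nat.gcd (a^2+a+1) (a^2+3*a+3) with hd
  have h1 : d ∣ a^2+a+1 := Nat.gcd_dvd_left _ _
  have h2 : d ∣ a^2+3*a+3 := Nat.gcd_dvd_right _ _
  have h5 : d ∣ 2*(a+1) := by
    have hs := Nat.dvd_sub h2 h1
    have e : (a^2+3*a+3) - (a^2+a+1) = 2*(a+1) := by omega
    rwa [e] at hs
  have h6 : d ∣ 2 := by
    have hA : d ∣ 2*(a^2+a+1) := h1.mul_left 2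
    have hB : d ∣ (a+1)*(2*(a+1)) := h5.mul_left _
    have hC : d ∣ (a+1)*(2*(a+1)) - 2*(a^2+a+1) := Nat.dvd_sub hB hA
    have e1 : (a+1)*(2*(a+1)) = 2*a^2+4*a+2 := by ring
    have e : (a+1)*(2*(a+1)) - 2*(a^2+a+1) = 2*a := by omega
    rw [e] at hC
    have hD := Nat.dvd_sub h5 hC
    have e2 : 2*(a+1) - 2*a = 2 := by omega
    rwa [e2] at hD
  rcases (Nat.dvd_prime Nat.prime_two).mp h6 with h | h
  · exact h
  · exfalso
    rw [h] at h1
    have h7 : (2:ℕ) ∣ a*(a+1) := (Nat.even_mul_succ_self a).two_dvd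
    have e3 : a*(a+1) = a^2+a := by ring
    omega

theorem segre_intersection_in_base_field (q : ℕ) (hq : IsPrimePow q) (hq3 : q % 3 ≠ 2)
    (F : Type*) [Field F] [Fintype F] (hF : Fintype.card F = q ^ 6)
    (E₂ E₃ : Subfield F) (hE₂ : Nat.card E₂ = q ^ 2) (hE₃ : Nat.card E₃ = q ^ 3)
    (x y : F) (hx : x ∈ E₂) (hy : y ∈ E₃) (hx0 : x ≠ 0) (hy0 : y ≠ 0)
    (h : (x * y) ^ ((q ^ 2 - q + 1) * (q - 1)) = 1) :
    (x * y) ^ q = x * y := by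
  obtain ⟨a, rfl⟩ : ∃ a, q = a + 1 := ⟨q - 1, by have := hq.two_le; omega⟩
  set q := a + 1 with hqdef
  -- x ^ (q^2 - 1) = 1
  haveI : Fintype E₂ := Fintype.ofFinite E₂
  haveI : Fintype E₃ := Fintype.ofFinite E₃
  have hcard2 : Fintype.card E₂ = q ^ 2 := by rw [← Nat.card_eq_fintype_card, hE₂]
  have hcard3 : Fintype.card E₃ = q ^ 3 := by rw [← Nat.card_eq_fintype_card, hE₃]
  have hx1 : x ^ (q ^ 2 - 1) = 1 := by
    have hne : (⟨x, hx⟩ : E₂) ≠ 0 := by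
      intro hcon; exact hx0 (by simpa using congrArg (Subtype.val) hcon)
    have := FiniteField.pow_card_sub_one_eq_one (⟨x, hx⟩ : E₂) hne
    rw [hcard2] at this
    have := congrArg (Subtype.val) this
    simpa using this
  have hy1 : y ^ (q ^ 3 - 1) = 1 := by
    have hne : (⟨y, hy⟩ : E₃) ≠ 0 := by
      intro hcon; exact hy0 (by simpa using congrArg (Subtype.val) hcon)
    have := FiniteField.pow_card_sub_one_eq_one (⟨y, hy⟩ : E₃) hne
    rw [hcard3] at this
    have := congrArg (Subtype.val) this
    simpa using this
  -- rephrase in terms of a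
  have e2 : q ^ 2 - 1 = (a + 2) * a := by
    have : q ^ 2 = a^2 + 2*a + 1 := by rw [hqdef]; ring
    have : q ^ 2 - 1 = a^2 + 2*a := by omega
    rw [this]; ring
  have e3 : q ^ 3 - 1 = (a^2 + 3*a + 3) * a := by
    have : q ^ 3 = a^3 + 3*a^2 + 3*a + 1 := by rw [hqdef]; ring
    have : q ^ 3 - 1 = a^3 + 3*a^2 + 3*a := by omega
    rw [this]; ring
  have eN : (q ^ 2 - q + 1) * (q - 1) = (a^2 + a + 1) * a := by
    have h1 : q ^ 2 = a^2 + 2*a + 1 := by rw [hqdef]; ring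
    have h2 : q - 1 = a := by omega
    have h3 : q ^ 2 - q + 1 = a^2 + a + 1 := by omega
    rw [h2, h3]
  rw [eN] at h
  rw [e2] at hx1
  rw [e3] at hy1
  -- order of x*y
  set n := orderOf (x * y) with hn
  have hn1 : n ∣ (a^2 + a + 1) * a := orderOf_dvd_of_pow_eq_one h
  have hn2 : n ∣ ((a + 2) * a) * ((a^2 + 3*a + 3) * a) := by
    apply orderOf_dvd_of_pow_eq_one
    rw [mul_pow, pow_mul, hx1, one_pow, one_mul, mul_comm ((a+2)*a), pow_mul, hy1, one_pow]
  have hcop : Nat.Coprime (a^2 + a + 1) (((a + 2) * a) * ((a^2 + 3*a + 3) * a)) := by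
    have c1 := aux_cop_a a
    have c2 := aux_cop_b a hq3
    have c3 := aux_cop_c a
    exact Nat.Coprime.mul_right (Nat.Coprime.mul_right c2 c1) (Nat.Coprime.mul_right c3 c1)
  have hcopn : Nat.Coprime n (a^2 + a + 1) :=
    (Nat.Coprime.coprime_dvd_right hn2 hcop).symm
  have hna : n ∣ a := hcopn.dvd_of_dvd_mul_left hn1
  have hxa : (x * y) ^ a = 1 := orderOf_dvd_iff_pow_eq_one.mp hna
  calc (x * y) ^ (a + 1) = (x * y) ^ a * (x * y) := by rw [pow_succ]
    _ = x * y := by rw [hxa, one_mul]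
end

section
/- Let q be a prime power, k ≥ 2, and suppose K is a two-intersection set with parameters (n, k, h_1, h_2) in PG(k−1, q): K is a set of n points such that every hyperplane contains exactly h_1 or exactly h_2 points of K. Then, as integers, n^2·(q^{k−2} − 1)/(q − 1) + n·((1 − h_1 − h_2)·(q^{k−1} − 1)/(q − 1) − (q^{k−2} − 1)/(q − 1)) + h_1·h_2·(q^k − 1)/(q − 1) = 0. -/
open Module Finset

lemma card_dualAnn {F V : Type*} [Field F] [Fintype F] [AddCommGroup V] [Module F V]
    [Finite V] (W : Submodule F V) :
    Nat.card W.dualAnnihilator = Fintype.card F ^ (finrank F V - finrank F W) := by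
  haveI : FiniteDimensional F V := Module.Finite.of_finite
  haveI : Finite (V ⧸ W) := Quotient.finite _
  have e := (Subspace.quotEquivAnnihilator W)
  rw [← Nat.card_congr e.toEquiv]
  haveI : Fintype (V ⧸ W) := Fintype.ofFinite _
  rw [Nat.card_eq_fintype_card, card_eq_pow_finrank (K := F)]
  congr 1
  have := Submodule.finrank_quotient_add_finrank W
  have h2 : finrank F W ≤ finrank F V := Submodule.finrank_le W
  omega

open Classical in
/-- number of nonzero functionals vanishing on a subspace of known rank -/
lemma card_filter_ann {F : Type*} [Field F] [Fintype F] {k : ℕ}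
    [Fintype ((Fin k → F) →ₗ[F] F)] (W : Submodule F (Fin k → F)) :
    (Finset.univ.filter fun φ : (Fin k → F) →ₗ[F] F => φ ≠ 0 ∧ ∀ x ∈ W, φ x = 0).card
      = Fintype.card F ^ (k - finrank F W) - 1 := by
  have h1 : (Finset.univ.filter fun φ : (Fin k → F) →ₗ[F] F => ∀ x ∈ W, φ x = 0).card
      = Fintype.card F ^ (k - finrank F W) := by
    have hc := card_dualAnn (F := F) W
    rw [Module.finrank_fin_fun] at hc
    rw [← hc, ← Nat.card_eq_finsetCard]
    apply Nat.card_congr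
    refine Equiv.subtypeEquiv (Equiv.refl _) fun φ => ?_
    simp [Submodule.mem_dualAnnihilator]
  have h2 : (Finset.univ.filter fun φ : (Fin k → F) →ₗ[F] F => φ ≠ 0 ∧ ∀ x ∈ W, φ x = 0)
      = (Finset.univ.filter fun φ : (Fin k → F) →ₗ[F] F => ∀ x ∈ W, φ x = 0).erase 0 := by
    ext φ
    simp [Finset.mem_erase, and_comm]
  rw [h2, Finset.card_erase_of_mem, h1]
  simp

theorem two_intersection_set_quadratic_identity
    (q : ℕ) (F : Type*) [Field F] [Fintype F] (hq : Fintype.card F = q)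
    (k n h₁ h₂ : ℕ) (hk : 2 ≤ k)
    (K : Set (Projectivization F (Fin k → F))) (hn : K.ncard = n)
    (hint : ∀ φ : (Fin k → F) →ₗ[F] F, φ ≠ 0 →
      {P ∈ K | φ P.rep = 0}.ncard = h₁ ∨ {P ∈ K | φ P.rep = 0}.ncard = h₂) :
    (n : ℚ) ^ 2 * (((q : ℚ) ^ (k - 2) - 1) / ((q : ℚ) - 1)) +
      (n : ℚ) * ((1 - (h₁ : ℚ) - (h₂ : ℚ)) * (((q : ℚ) ^ (k - 1) - 1) / ((q : ℚ) - 1)) -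
        ((q : ℚ) ^ (k - 2) - 1) / ((q : ℚ) - 1)) +
      (h₁ : ℚ) * (h₂ : ℚ) * (((q : ℚ) ^ k - 1) / ((q : ℚ) - 1)) = 0 := by
  classical
  subst hq
  set q := Fintype.card F with hq
  have hq2 : 2 ≤ q := Fintype.one_lt_card
  -- finiteness
  haveI : Finite (Projectivization F (Fin k → F)) := Quotient.finite _
  haveI : Fintype (Projectivization F (Fin k → F)) := Fintype.ofFinite _
  haveI : Finite ((Fin k → F) →ₗ[F] F) :=
    Finite.of_injective (fun φ => (φ : (Fin k → F) → F)) DFunLike.coe_injective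
  haveI : Fintype ((Fin k → F) →ₗ[F] F) := Fintype.ofFinite _
  set Kf : Finset (Projectivization F (Fin k → F)) := K.toFinset with hKf
  have hKfcard : Kf.card = n := by
    rw [← hn, Set.ncard_eq_toFinset_card' K]
  set D : Finset ((Fin k → F) →ₗ[F] F) := Finset.univ.filter (· ≠ 0) with hD
  set f : ((Fin k → F) →ₗ[F] F) → ℕ := fun φ => (Kf.filter fun P => φ P.rep = 0).card with hf
  -- count of hyperplanes (as nonzero functionals)
  have hDcard : D.card = q ^ k - 1 := by
    have hc := card_filter_ann (F := F) (k := k) ⊥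
    rw [finrank_bot, Nat.sub_zero] at hc
    rw [hD, ← hc]
    congr 1
    ext φ
    simp +contextual [Submodule.mem_bot]
  -- count through one point
  have hone : ∀ P : Projectivization F (Fin k → F),
      (D.filter fun φ => φ P.rep = 0).card = q ^ (k - 1) - 1 := by
    intro P
    have hc := card_filter_ann (F := F) (k := k) (Submodule.span F {P.rep})
    rw [finrank_span_singleton P.rep_nonzero] at hc
    rw [← hc]
    congr 1
    ext φ
    simp only [hD, Finset.mem_filter, Finset.mem_univ, true_and, Finset.filter_filter]
    constructor
    · rintro ⟨h1, h2⟩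
      refine ⟨h1, fun x hx => ?_⟩
      have hle : Submodule.span F {P.rep} ≤ LinearMap.ker φ := by
        rw [Submodule.span_le, Set.singleton_subset_iff]
        exact h2
      exact hle hx
    · rintro ⟨h1, h2⟩
      exact ⟨h1, h2 P.rep (Submodule.mem_span_singleton_self _)⟩
  -- count through two distinct points
  have htwo : ∀ P Q : Projectivization F (Fin k → F), P ≠ Q →
      (D.filter fun φ => φ P.rep = 0 ∧ φ Q.rep = 0).card = q ^ (k - 2) - 1 := by
    intro P Q hPQ
    have hli : LinearIndependent F ![P.rep, Q.rep] := by
      rw [linearIndependent_fin2]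
      refine ⟨by simpa using Q.rep_nonzero, fun a ha => ?_⟩
      simp only [Matrix.cons_val_one, Matrix.head_cons, Matrix.cons_val_zero] at ha
      apply hPQ
      have ha0 : a ≠ 0 := by
        rintro rfl
        exact P.rep_nonzero (by simpa using ha.symm)
      have hmm := (Projectivization.mk_eq_mk_iff F P.rep Q.rep P.rep_nonzero Q.rep_nonzero).2
        ⟨Units.mk0 a ha0, ha⟩
      rwa [Projectivization.mk_rep, Projectivization.mk_rep] at hmm
    have hfr : finrank F (Submodule.span F (Set.range ![P.rep, Q.rep])) = 2 := by
      rw [finrank_span_eq_card hli, Fintype.card_fin]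
    have hc := card_filter_ann (F := F) (k := k) (Submodule.span F (Set.range ![P.rep, Q.rep]))
    rw [hfr] at hc
    rw [← hc]
    congr 1
    ext φ
    simp only [hD, Finset.mem_filter, Finset.mem_univ, true_and, Finset.filter_filter]
    constructor
    · rintro ⟨h1, h2, h3⟩
      refine ⟨h1, fun x hx => ?_⟩
      have hle : Submodule.span F (Set.range ![P.rep, Q.rep]) ≤ LinearMap.ker φ := by
        rw [Submodule.span_le, Set.range_subset_iff]
        intro i
        fin_cases i <;> simpa
      exact hle hx
    · rintro ⟨h1, h2⟩
      exact ⟨h1, h2 P.rep (Submodule.subset_span ⟨0, rfl⟩),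
        h2 Q.rep (Submodule.subset_span ⟨1, rfl⟩)⟩
  -- first moment
  have hS1 : ∑ φ ∈ D, f φ = n * (q ^ (k - 1) - 1) := by
    have step : ∑ φ ∈ D, f φ = ∑ φ ∈ D, ∑ P ∈ Kf, if φ P.rep = 0 then 1 else 0 := by
      refine Finset.sum_congr rfl fun φ _ => ?_
      simp only [hf]
      rw [Finset.card_filter]
    rw [step, Finset.sum_comm]
    have step2 : ∀ P ∈ Kf, (∑ φ ∈ D, if φ P.rep = 0 then 1 else 0) = q ^ (k - 1) - 1 := by
      intro P _
      rw [← Finset.card_filter]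
      exact hone P
    rw [Finset.sum_congr rfl step2, Finset.sum_const, hKfcard, smul_eq_mul]
  -- second moment
  have hS2 : ∑ φ ∈ D, f φ * f φ
      = n * (q ^ (k - 1) - 1) + n * ((n - 1) * (q ^ (k - 2) - 1)) := by
    have step : ∀ φ ∈ D, f φ * f φ
        = ∑ P ∈ Kf, ∑ Q ∈ Kf, if φ P.rep = 0 ∧ φ Q.rep = 0 then 1 else 0 := by
      intro φ _
      simp only [hf]
      rw [Finset.card_filter, Finset.sum_mul_sum]
      refine Finset.sum_congr rfl fun P _ => Finset.sum_congr rfl fun Q _ => ?_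
      by_cases hp : φ P.rep = 0 <;> by_cases hq' : φ Q.rep = 0 <;> simp [hp, hq']
    rw [Finset.sum_congr rfl step, Finset.sum_comm]
    have inner : ∀ P ∈ Kf,
        (∑ φ ∈ D, ∑ Q ∈ Kf, if φ P.rep = 0 ∧ φ Q.rep = 0 then 1 else 0)
          = (q ^ (k - 1) - 1) + (n - 1) * (q ^ (k - 2) - 1) := by
      intro P hP
      rw [Finset.sum_comm]
      have h1 : ∀ Q ∈ Kf, (∑ φ ∈ D, if φ P.rep = 0 ∧ φ Q.rep = 0 then 1 else 0)
          = if Q = P then q ^ (k - 1) - 1 else q ^ (k - 2) - 1 := by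
        intro Q _
        rw [← Finset.card_filter]
        by_cases hQ : Q = P
        · subst hQ
          rw [if_pos rfl, ← hone Q]
          congr 1
          ext φ
          simp [and_self]
        · rw [if_neg hQ]
          exact htwo P Q (fun h => hQ h.symm)
      rw [Finset.sum_congr rfl h1, ← Finset.add_sum_erase _ _ hP, if_pos rfl]
      congr 1
      have h2 : ∀ Q ∈ Kf.erase P,
          (if Q = P then q ^ (k - 1) - 1 else q ^ (k - 2) - 1) = q ^ (k - 2) - 1 := by
        intro Q hQ
        rw [if_neg (Finset.ne_of_mem_erase hQ)]
      rw [Finset.sum_congr rfl h2, Finset.sum_const, Finset.card_erase_of_mem hP, hKfcard,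
        smul_eq_mul]
    rw [Finset.sum_congr rfl inner, Finset.sum_const, hKfcard, smul_eq_mul, Nat.mul_add]
  -- each hyperplane value is h₁ or h₂
  have hfh : ∀ φ ∈ D, f φ = h₁ ∨ f φ = h₂ := by
    intro φ hφ
    have hφ0 : φ ≠ 0 := by simpa [hD] using hφ
    have hcv : {P ∈ K | φ P.rep = 0}.ncard = f φ := by
      rw [Set.ncard_eq_toFinset_card']
      simp only [hf]
      congr 1
      ext P
      simp [hKf, Set.mem_toFinset]
    have := hint φ hφ0
    rwa [hcv] at this
  -- quadratic relation
  have key : ∑ φ ∈ D, ((f φ : ℚ) - h₁) * ((f φ : ℚ) - h₂) = 0 :=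
    Finset.sum_eq_zero fun φ hφ => by rcases hfh φ hφ with h | h <;> rw [h] <;> ring
  have expand : ∀ φ ∈ D, ((f φ : ℚ) - h₁) * ((f φ : ℚ) - h₂)
      = (f φ : ℚ) * (f φ : ℚ) - ((h₁ : ℚ) + h₂) * (f φ : ℚ) + (h₁ : ℚ) * h₂ :=
    fun φ _ => by ring
  rw [Finset.sum_congr rfl expand, Finset.sum_add_distrib, Finset.sum_sub_distrib,
    ← Finset.mul_sum, Finset.sum_const, nsmul_eq_mul] at key
  have hc1 : (∑ φ ∈ D, (f φ : ℚ) * (f φ : ℚ)) = ((∑ φ ∈ D, f φ * f φ : ℕ) : ℚ) := by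
    push_cast; rfl
  have hc2 : (∑ φ ∈ D, (f φ : ℚ)) = ((∑ φ ∈ D, f φ : ℕ) : ℚ) := by push_cast; rfl
  rw [hc1, hc2, hS1, hS2, hDcard] at key
  have h1p : (1:ℕ) ≤ q ^ (k - 1) := Nat.one_le_pow _ _ (by omega)
  have h2p : (1:ℕ) ≤ q ^ (k - 2) := Nat.one_le_pow _ _ (by omega)
  have h3p : (1:ℕ) ≤ q ^ k := Nat.one_le_pow _ _ (by omega)
  have E : (n : ℚ) * ((q:ℚ) ^ (k-1) - 1) + (n:ℚ) * (((n:ℚ) - 1) * ((q:ℚ) ^ (k-2) - 1))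
      - ((h₁:ℚ) + h₂) * ((n:ℚ) * ((q:ℚ) ^ (k-1) - 1)) + (h₁:ℚ) * h₂ * ((q:ℚ) ^ k - 1) = 0 := by
    cases n with
    | zero =>
      push_cast [Nat.cast_sub h1p, Nat.cast_sub h2p, Nat.cast_sub h3p] at key ⊢
      linear_combination key
    | succ m =>
      push_cast [Nat.cast_sub h1p, Nat.cast_sub h2p, Nat.cast_sub h3p, Nat.succ_sub_one]
        at key ⊢
      linear_combination key
  have hq1 : (q : ℚ) - 1 ≠ 0 := by
    have : (2:ℚ) ≤ q := by exact_mod_cast hq2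
    intro h; linarith
  field_simp
  linear_combination E
end

section
/- Let q be a prime power, k ≥ 2, and suppose K is a two-intersection set with parameters (n, k, h_1, h_2) in PG(k−1, q) with h_1 < h_2, such that K is nonempty and K is not the set of all points of PG(k−1, q). Then h_2 − h_1 divides q^{k−2}. -/
set_option maxHeartbeats 1000000

open Module Submodule Finset Function

section Helpers

variable {F : Type*} [Field F] {V : Type*} [AddCommGroup V] [Module F V]

/-- A vector outside a subspace admits a functional vanishing on the subspace and equal
to 1 on the vector. -/
lemma exists_dual_one (S : Submodule F V) (x : V) (hx : x ∉ S) :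
    ∃ φ : Module.Dual F V, (∀ y ∈ S, φ y = 0) ∧ φ x = 1 := by
  obtain ⟨f, hfx, hfS⟩ := S.exists_dual_map_eq_bot_of_notMem hx inferInstance
  refine ⟨(f x)⁻¹ • f, fun y hy => ?_, ?_⟩
  · have : f y = 0 := by
      have : f y ∈ S.map f := Submodule.mem_map_of_mem hy
      rwa [hfS, Submodule.mem_bot] at this
    simp [this]
  · simp [inv_mul_cancel₀ hfx]

/-- Fibers of a linear map over two points which are simultaneously in or out of the
range have the same cardinality. -/
lemma fiber_ncard_eq {M N : Type*} [AddCommGroup M] [AddCommGroup N] [Module F M]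
    [Module F N] (f : M →ₗ[F] N) (y z : N) (h : (∃ x, f x = y) ↔ (∃ x, f x = z)) :
    {x | f x = y}.ncard = {x | f x = z}.ncard := by
  by_cases hy : ∃ x, f x = y
  · obtain ⟨x₀, hx₀⟩ := hy
    obtain ⟨x₁, hx₁⟩ := h.mp ⟨x₀, hx₀⟩
    have himg : {x | f x = z} = (fun a => a - x₀ + x₁) '' {x | f x = y} := by
      ext a
      simp only [Set.mem_image, Set.mem_setOf_eq]
      constructor
      · intro ha
        refine ⟨a - x₁ + x₀, by simp [map_add, map_sub, ha, hx₀, hx₁], by abel⟩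
      · rintro ⟨b, hb, rfl⟩
        simp [map_add, map_sub, hb, hx₀, hx₁]
    rw [himg, Set.ncard_image_of_injective]
    intro a b hab
    simpa using hab
  · have hz : ¬ ∃ x, f x = z := fun hzz => hy (h.mpr hzz)
    have h1 : {x | f x = y} = ∅ := by
      ext a; simp only [Set.mem_setOf_eq, Set.mem_empty_iff_false, iff_false]
      exact fun ha => hy ⟨a, ha⟩
    have h2 : {x | f x = z} = ∅ := by
      ext a; simp only [Set.mem_setOf_eq, Set.mem_empty_iff_false, iff_false]
      exact fun ha => hz ⟨a, ha⟩
    rw [h1, h2]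

/-- For a surjective linear map between finite modules, every fiber has cardinality
`card M / card N`. -/
lemma card_fiber_of_surjective {M N : Type*} [AddCommGroup M] [AddCommGroup N]
    [Module F M] [Module F N] [Fintype M] [Fintype N] (f : M →ₗ[F] N)
    (hf : Function.Surjective f) (y : N) :
    Fintype.card M = Fintype.card N * {x | f x = y}.ncard := by
  classical
  have h1 : (Finset.univ : Finset M).card
      = ∑ z ∈ (Finset.univ : Finset N), (Finset.univ.filter fun x => f x = z).card :=
    Finset.card_eq_sum_card_fiberwise (fun x _ => Finset.mem_univ _)
  have h2 : ∀ z : N, (Finset.univ.filter fun x => f x = z).card = {x | f x = y}.ncard := by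
    intro z
    have h3 : ({x | f x = z}).ncard = {x | f x = y}.ncard :=
      fiber_ncard_eq f z y (by simp [hf z, hf y])
    rw [← h3, ← Set.ncard_coe_finset]
    congr 1
    ext a; simp
  rw [← Finset.card_univ, h1, Finset.sum_congr rfl (fun z _ => h2 z), Finset.sum_const,
    Finset.card_univ, smul_eq_mul]

end Helpers

theorem two_intersection_set_divisibility
    (q : ℕ) (F : Type*) [Field F] [Fintype F] (hq : Fintype.card F = q)
    (k n h₁ h₂ : ℕ) (hk : 2 ≤ k) (hh : h₁ < h₂)
    (K : Set (Projectivization F (Fin k → F))) (hn : K.ncard = n)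
    (hK_ne : K.Nonempty) (hK_ne_univ : K ≠ Set.univ)
    (hint : ∀ φ : (Fin k → F) →ₗ[F] F, φ ≠ 0 →
      {P ∈ K | φ P.rep = 0}.ncard = h₁ ∨ {P ∈ K | φ P.rep = 0}.ncard = h₂) :
    (h₂ - h₁) ∣ q ^ (k - 2) := by
  classical
  have hq0 : 0 < q := hq ▸ Fintype.card_pos
  haveI : Finite ((Fin k → F) →ₗ[F] F) :=
    Finite.of_injective (fun (φ : (Fin k → F) →ₗ[F] F) => (φ : (Fin k → F) → F))
      DFunLike.coe_injective
  haveI : Fintype ((Fin k → F) →ₗ[F] F) := Fintype.ofFinite _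
  haveI : Finite (Projectivization F (Fin k → F)) := Quotient.finite _
  obtain ⟨P₀, hP₀⟩ := hK_ne
  obtain ⟨Q₀, hQ₀⟩ := (Set.ne_univ_iff_exists_notMem K).mp hK_ne_univ
  have hPQ : P₀ ≠ Q₀ := fun h => hQ₀ (h ▸ hP₀)
  -- reps of distinct projective points span different lines
  have key_span : ∀ P Q : Projectivization F (Fin k → F), P ≠ Q →
      P.rep ∉ Submodule.span F {Q.rep} := by
    intro P Q hne hmem
    rw [Submodule.mem_span_singleton] at hmem
    obtain ⟨a, ha⟩ := hmem
    apply hne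
    rw [← P.mk_rep, ← Q.mk_rep,
      Projectivization.mk_eq_mk_iff' F _ _ P.rep_nonzero Q.rep_nonzero]
    exact ⟨a, ha⟩
  set v := P₀.rep with hv
  set w := Q₀.rep with hw
  -- functionals separating v and w
  have hex : ∀ x y : Fin k → F, x ∉ Submodule.span F {y} →
      ∃ φ : (Fin k → F) →ₗ[F] F, φ x = 1 ∧ φ y = 0 := by
    intro x y hxy
    obtain ⟨φ, hφS, hφx⟩ := exists_dual_one (Submodule.span F {y}) x hxy
    exact ⟨φ, hφx, hφS y (Submodule.mem_span_singleton_self y)⟩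
  obtain ⟨φ₁, hφ₁v, hφ₁w⟩ := hex v w (key_span P₀ Q₀ hPQ)
  obtain ⟨φ₂, hφ₂w, hφ₂v⟩ := hex w v (key_span Q₀ P₀ hPQ.symm)
  -- the evaluation map at (v, w)
  set e : ((Fin k → F) →ₗ[F] F) →ₗ[F] F × F :=
    LinearMap.prod (LinearMap.applyₗ v) (LinearMap.applyₗ w) with he
  have he_apply : ∀ φ : (Fin k → F) →ₗ[F] F, e φ = (φ v, φ w) := fun φ => rfl
  have hesurj : Function.Surjective e := by
    rintro ⟨a, b⟩
    refine ⟨a • φ₁ + b • φ₂, ?_⟩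
    rw [he_apply]
    simp [hφ₁v, hφ₁w, hφ₂v, hφ₂w]
  -- cardinality of the dual space
  have hD : Fintype.card ((Fin k → F) →ₗ[F] F) = q ^ k := by
    rw [Fintype.card_congr (LinearEquiv.piRing F F (Fin k) F).toEquiv]
    simp [hq]
  have hFF : Fintype.card (F × F) = q ^ 2 := by
    rw [Fintype.card_prod, hq, sq]
  have hpow : q ^ k = q ^ 2 * q ^ (k - 2) := by
    rw [← pow_add, Nat.add_sub_cancel' hk]
  -- both normalized fiber sets have cardinality q^(k-2)
  have fibcard : ∀ y : F × F,
      {φ : (Fin k → F) →ₗ[F] F | e φ = y}.ncard = q ^ (k - 2) := by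
    intro y
    have h1 := card_fiber_of_surjective e hesurj y
    rw [hD, hFF, hpow] at h1
    exact (Nat.eq_of_mul_eq_mul_left (pow_pos hq0 2) h1).symm
  have hS1card : {φ : (Fin k → F) →ₗ[F] F | φ v = 0 ∧ φ w = 1}.ncard = q ^ (k - 2) := by
    rw [← fibcard (0, 1)]
    congr 1
    ext φ
    rw [Set.mem_setOf_eq, Set.mem_setOf_eq, he_apply, Prod.ext_iff]
  have hS2card : {φ : (Fin k → F) →ₗ[F] F | φ v = 1 ∧ φ w = 0}.ncard = q ^ (k - 2) := by
    rw [← fibcard (1, 0)]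
    congr 1
    ext φ
    rw [Set.mem_setOf_eq, Set.mem_setOf_eq, he_apply, Prod.ext_iff]
  -- the swap lemma
  have swap_ex : ∀ x y u : Fin k → F, x ∉ Submodule.span F {u} →
      (∃ φ : (Fin k → F) →ₗ[F] F, φ x = 0 ∧ φ y = 1 ∧ φ u = 0) →
      (∃ ψ : (Fin k → F) →ₗ[F] F, ψ x = 1 ∧ ψ y = 0 ∧ ψ u = 0) := by
    rintro x y u hxu ⟨φ, hφx, hφy, hφu⟩
    by_cases hx : x ∈ Submodule.span F {y, u}
    · exfalso
      rw [Submodule.mem_span_pair] at hx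
      obtain ⟨a, b, hab⟩ := hx
      have ha : a = 0 := by
        have := congrArg φ hab
        simpa [map_add, map_smul, hφy, hφu, hφx] using this
      apply hxu
      rw [Submodule.mem_span_singleton]
      exact ⟨b, by rw [← hab, ha]; simp⟩
    · obtain ⟨ψ, hψ0, hψx⟩ := exists_dual_one (Submodule.span F {y, u}) x hx
      exact ⟨ψ, hψx,
        hψ0 y (Submodule.subset_span (by simp)),
        hψ0 u (Submodule.subset_span (by simp))⟩
  -- per-point fiber equality for P ≠ P₀ in K
  have hperP : ∀ P : Projectivization F (Fin k → F), P ∈ K → P ≠ P₀ →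
      {φ : (Fin k → F) →ₗ[F] F | (φ v = 0 ∧ φ w = 1) ∧ φ P.rep = 0}.ncard
      = {φ : (Fin k → F) →ₗ[F] F | (φ v = 1 ∧ φ w = 0) ∧ φ P.rep = 0}.ncard := by
    intro P hPK hne
    set u := P.rep with hu
    have hvu : v ∉ Submodule.span F {u} := key_span P₀ P hne.symm
    have hwu : w ∉ Submodule.span F {u} :=
      key_span Q₀ P (fun h => hQ₀ (h ▸ hPK))
    set e3 : ((Fin k → F) →ₗ[F] F) →ₗ[F] F × (F × F) :=
      LinearMap.prod (LinearMap.applyₗ v)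
        (LinearMap.prod (LinearMap.applyₗ w) (LinearMap.applyₗ u)) with he3
    have he3_apply : ∀ φ : (Fin k → F) →ₗ[F] F, e3 φ = (φ v, (φ w, φ u)) := fun φ => rfl
    have hiff : (∃ φ : (Fin k → F) →ₗ[F] F, e3 φ = (0, (1, 0)))
        ↔ (∃ φ : (Fin k → F) →ₗ[F] F, e3 φ = (1, (0, 0))) := by
      simp only [he3_apply, Prod.ext_iff]
      constructor
      · rintro ⟨φ, h1, h2, h3⟩
        obtain ⟨ψ, g1, g2, g3⟩ := swap_ex v w u hvu ⟨φ, h1, h2, h3⟩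
        exact ⟨ψ, g1, g2, g3⟩
      · rintro ⟨φ, h1, h2, h3⟩
        obtain ⟨ψ, g1, g2, g3⟩ := swap_ex w v u hwu ⟨φ, h2, h1, h3⟩
        exact ⟨ψ, g2, g1, g3⟩
    have h1 : {φ : (Fin k → F) →ₗ[F] F | (φ v = 0 ∧ φ w = 1) ∧ φ u = 0}
        = {φ : (Fin k → F) →ₗ[F] F | e3 φ = (0, (1, 0))} := by
      ext φ; simp only [Set.mem_setOf_eq, he3_apply, Prod.ext_iff]; tauto
    have h2 : {φ : (Fin k → F) →ₗ[F] F | (φ v = 1 ∧ φ w = 0) ∧ φ u = 0}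
        = {φ : (Fin k → F) →ₗ[F] F | e3 φ = (1, (0, 0))} := by
      ext φ; simp only [Set.mem_setOf_eq, he3_apply, Prod.ext_iff]; tauto
    rw [h1, h2]
    exact fiber_ncard_eq e3 _ _ hiff
  -- Finset bookkeeping
  have hKfin : K.Finite := Set.toFinite K
  set KF : Finset (Projectivization F (Fin k → F)) := hKfin.toFinset with hKF
  have hP₀mem : P₀ ∈ KF := hKfin.mem_toFinset.mpr hP₀
  set S1 : Finset ((Fin k → F) →ₗ[F] F) :=
    Finset.univ.filter (fun φ => φ v = 0 ∧ φ w = 1) with hS1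
  set S2 : Finset ((Fin k → F) →ₗ[F] F) :=
    Finset.univ.filter (fun φ => φ v = 1 ∧ φ w = 0) with hS2
  -- bridge between ncards and Finset cards
  have hcnt : ∀ φ : (Fin k → F) →ₗ[F] F,
      {P ∈ K | φ P.rep = 0}.ncard = (KF.filter fun P => φ P.rep = 0).card := by
    intro φ
    rw [← Set.ncard_coe_finset]
    congr 1
    ext P
    simp [hKF, hKfin.mem_toFinset]
  have hS1c : S1.card = q ^ (k - 2) := by
    rw [← hS1card, ← Set.ncard_coe_finset]
    congr 1
    ext φ; simp [hS1]
  have hS2c : S2.card = q ^ (k - 2) := by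
    rw [← hS2card, ← Set.ncard_coe_finset]
    congr 1
    ext φ; simp [hS2]
  -- the exchange of summation
  have exchange : ∀ S : Finset ((Fin k → F) →ₗ[F] F),
      ∑ φ ∈ S, (KF.filter fun P => φ P.rep = 0).card
      = ∑ P ∈ KF, (S.filter fun φ => φ P.rep = 0).card := by
    intro S
    simp_rw [Finset.card_filter]
    rw [Finset.sum_comm]
  have split : ∀ S : Finset ((Fin k → F) →ₗ[F] F),
      ∑ P ∈ KF, (S.filter fun φ => φ P.rep = 0).card
      = (S.filter fun φ => φ v = 0).card
        + ∑ P ∈ KF.erase P₀, (S.filter fun φ => φ P.rep = 0).card :=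
    fun S => (Finset.add_sum_erase KF _ hP₀mem).symm
  -- head terms
  have head1 : (S1.filter fun φ => φ v = 0).card = q ^ (k - 2) := by
    rw [Finset.filter_true_of_mem, hS1c]
    intro φ hφ
    exact ((Finset.mem_filter.mp hφ).2).1
  have head2 : (S2.filter fun φ => φ v = 0).card = 0 := by
    rw [Finset.card_eq_zero, Finset.filter_eq_empty_iff]
    intro φ hφ
    have h1 : φ v = 1 := ((Finset.mem_filter.mp hφ).2).1
    rw [h1]
    exact one_ne_zero
  -- tail sums agree
  have tails : ∑ P ∈ KF.erase P₀, (S1.filter fun φ => φ P.rep = 0).card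
      = ∑ P ∈ KF.erase P₀, (S2.filter fun φ => φ P.rep = 0).card := by
    refine Finset.sum_congr rfl (fun P hP => ?_)
    obtain ⟨hne, hPK⟩ := Finset.mem_erase.mp hP
    have hPK' : P ∈ K := hKfin.mem_toFinset.mp hPK
    have b1 : (S1.filter fun φ => φ P.rep = 0).card
        = {φ : (Fin k → F) →ₗ[F] F | (φ v = 0 ∧ φ w = 1) ∧ φ P.rep = 0}.ncard := by
      rw [← Set.ncard_coe_finset]; congr 1; ext φ; simp [hS1]
    have b2 : (S2.filter fun φ => φ P.rep = 0).card
        = {φ : (Fin k → F) →ₗ[F] F | (φ v = 1 ∧ φ w = 0) ∧ φ P.rep = 0}.ncard := by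
      rw [← Set.ncard_coe_finset]; congr 1; ext φ; simp [hS2]
    rw [b1, b2, hperP P hPK' hne]
  -- the main count: sum over S1 exceeds sum over S2 by q^(k-2)
  have main : ∑ φ ∈ S1, (KF.filter fun P => φ P.rep = 0).card
      = q ^ (k - 2) + ∑ φ ∈ S2, (KF.filter fun P => φ P.rep = 0).card := by
    rw [exchange S1, exchange S2, split S1, split S2, head1, head2, tails]
    omega
  -- values of the counting function
  have hvals : ∀ S : Finset ((Fin k → F) →ₗ[F] F),
      (∀ φ ∈ S, φ ≠ 0) →
      ∑ φ ∈ S, (KF.filter fun P => φ P.rep = 0).card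
        = h₁ * (S.filter fun φ => (KF.filter fun P => φ P.rep = 0).card = h₁).card
          + h₂ * (S.filter fun φ => (KF.filter fun P => φ P.rep = 0).card = h₂).card
      ∧ (S.filter fun φ => (KF.filter fun P => φ P.rep = 0).card = h₁).card
          + (S.filter fun φ => (KF.filter fun P => φ P.rep = 0).card = h₂).card
        = S.card := by
    intro S hS0
    have hval : ∀ φ ∈ S, (KF.filter fun P => φ P.rep = 0).card = h₁
        ∨ (KF.filter fun P => φ P.rep = 0).card = h₂ := by
      intro φ hφ
      have := hint φ (hS0 φ hφ)
      rwa [hcnt φ] at this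
    have hfilt : S.filter (fun φ => ¬ (KF.filter fun P => φ P.rep = 0).card = h₁)
        = S.filter (fun φ => (KF.filter fun P => φ P.rep = 0).card = h₂) := by
      ext φ
      simp only [Finset.mem_filter]
      constructor
      · rintro ⟨hφS, hne⟩
        exact ⟨hφS, (hval φ hφS).resolve_left hne⟩
      · rintro ⟨hφS, heq⟩
        exact ⟨hφS, fun h1 => hh.ne (h1 ▸ heq ▸ rfl)⟩
    constructor
    · rw [← Finset.sum_filter_add_sum_filter_not S
        (fun φ => (KF.filter fun P => φ P.rep = 0).card = h₁), hfilt]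
      congr 1
      · rw [Finset.sum_congr rfl (fun φ hφ => (Finset.mem_filter.mp hφ).2),
          Finset.sum_const, smul_eq_mul, mul_comm]
      · rw [Finset.sum_congr rfl (fun φ hφ => (Finset.mem_filter.mp hφ).2),
          Finset.sum_const, smul_eq_mul, mul_comm]
    · rw [← hfilt]
      exact Finset.card_filter_add_card_filter_not _
  have hS1ne : ∀ φ ∈ S1, φ ≠ (0 : (Fin k → F) →ₗ[F] F) := by
    intro φ hφ h0
    have := ((Finset.mem_filter.mp hφ).2).2
    rw [h0] at this
    simp at this
  have hS2ne : ∀ φ ∈ S2, φ ≠ (0 : (Fin k → F) →ₗ[F] F) := by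
    intro φ hφ h0
    have := ((Finset.mem_filter.mp hφ).2).1
    rw [h0] at this
    simp at this
  obtain ⟨hsum1, hcard1⟩ := hvals S1 hS1ne
  obtain ⟨hsum2, hcard2⟩ := hvals S2 hS2ne
  set a₁ := (S1.filter fun φ => (KF.filter fun P => φ P.rep = 0).card = h₁).card
  set b₁ := (S1.filter fun φ => (KF.filter fun P => φ P.rep = 0).card = h₂).card
  set a₂ := (S2.filter fun φ => (KF.filter fun P => φ P.rep = 0).card = h₁).card
  set b₂ := (S2.filter fun φ => (KF.filter fun P => φ P.rep = 0).card = h₂).card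
  rw [hsum1, hsum2] at main
  rw [hS1c] at hcard1
  rw [hS2c] at hcard2
  -- final integer arithmetic
  have e1 : (h₁ : ℤ) * a₁ + h₂ * b₁ = (q : ℤ) ^ (k - 2) + (h₁ * a₂ + h₂ * b₂) := by
    exact_mod_cast congrArg (Nat.cast : ℕ → ℤ) main
  have e2 : (a₁ : ℤ) + b₁ = (q : ℤ) ^ (k - 2) := by
    exact_mod_cast congrArg (Nat.cast : ℕ → ℤ) hcard1
  have e3 : (a₂ : ℤ) + b₂ = (q : ℤ) ^ (k - 2) := by
    exact_mod_cast congrArg (Nat.cast : ℕ → ℤ) hcard2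
  have final : ((h₂ : ℤ) - h₁) * ((b₁ : ℤ) - b₂) = (q : ℤ) ^ (k - 2) := by
    linear_combination e1 - (h₁ : ℤ) * e2 + (h₁ : ℤ) * e3
  have hdvd : ((h₂ - h₁ : ℕ) : ℤ) ∣ ((q ^ (k - 2) : ℕ) : ℤ) := by
    rw [Nat.cast_sub hh.le]
    push_cast
    exact Dvd.intro _ final
  exact_mod_cast hdvd
end
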